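/- Let k > 0 and μ ∈ (0,1). The PGN(μ,k) distribution is symmetric about 0 — i.e. the pushforward of PGN(μ,k) under x ↦ −x equals PGN(μ,k) — if and only if μ = 1/2. -/

import Mathlib

open MeasureTheory Real Set

/-- Density of the chi-squared distribution with `k` degrees of freedom. -/
noncomputable def chiSqDensity (k : ℝ) (v : ℝ) : ℝ :=
  if 0 < v then v ^ (k / 2 - 1) * Real.exp (-v / 2) / ((2 : ℝ) ^ (k / 2) * Real.Gamma (k / 2))
  else 0

/-- The Beta function `B(a,b) = Γ(a)Γ(b)/Γ(a+b)`. -/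
noncomputable def realBeta (a b : ℝ) : ℝ := Real.Gamma a * Real.Gamma b / Real.Gamma (a + b)

/-- Density of the Beta(2μ, 2(1-μ)) distribution. -/
noncomputable def betaDensity (μ : ℝ) (u : ℝ) : ℝ :=
  if 0 < u ∧ u < 1 then
    u ^ (2 * μ - 1) * (1 - u) ^ (1 - 2 * μ) / realBeta (2 * μ) (2 * (1 - μ))
  else 0

/-- The chi-squared distribution with `k` degrees of freedom, as a measure on ℝ. -/
noncomputable def chiSqMeasure (k : ℝ) : Measure ℝ :=
  volume.withDensity (fun v => ENNReal.ofReal (chiSqDensity k v))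

/-- The Beta(2μ, 2(1-μ)) distribution, as a measure on ℝ. -/
noncomputable def betaMeasure (μ : ℝ) : Measure ℝ :=
  volume.withDensity (fun u => ENNReal.ofReal (betaDensity μ u))

/-- The polar-generalized normal distribution PGN(μ, k): the pushforward of
(chi-squared k) ⊗ (Beta(2μ, 2(1-μ))) under `(v, u) ↦ √v · cos (π u)`. -/
noncomputable def PGN (μ k : ℝ) : Measure ℝ :=
  Measure.map (fun p : ℝ × ℝ => Real.sqrt p.1 * Real.cos (π * p.2))
    ((chiSqMeasure k).prod (betaMeasure μ))

/- ### Auxiliary lemmas -/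

lemma measurable_betaDensity (μ : ℝ) : Measurable (betaDensity μ) := by
  unfold betaDensity realBeta
  exact Measurable.ite measurableSet_Ioo (by fun_prop) (by fun_prop)

lemma measurable_chiSqDensity (k : ℝ) : Measurable (chiSqDensity k) := by
  unfold chiSqDensity
  exact Measurable.ite measurableSet_Ioi (by fun_prop) (by fun_prop)

lemma measurable_pgnMap : Measurable (fun p : ℝ × ℝ => Real.sqrt p.1 * Real.cos (π * p.2)) := by
  fun_prop

instance sfinite_chiSq (k : ℝ) : SFinite (chiSqMeasure k) := by
  unfold chiSqMeasure; infer_instance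

instance sfinite_beta (μ : ℝ) : SFinite (betaMeasure μ) := by
  unfold betaMeasure; infer_instance

lemma betaDensity_reflect (μ u : ℝ) : betaDensity (1 - μ) (1 - u) = betaDensity μ u := by
  unfold betaDensity realBeta
  by_cases h : 0 < u ∧ u < 1
  · rw [if_pos ⟨by linarith [h.2], by linarith [h.1]⟩, if_pos h]
    rw [show (1:ℝ) - (1 - u) = u by ring, show 2 * (1 - μ) - 1 = 1 - 2 * μ by ring,
      show 1 - 2 * (1 - μ) = 2 * μ - 1 by ring, show 2 * (1 - (1 - μ)) = 2 * μ by ring,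
      show 2 * (1 - μ) + 2 * μ = 2 * μ + 2 * (1 - μ) by ring]
    ring
  · rw [if_neg (fun hc => h ⟨by linarith [hc.2], by linarith [hc.1]⟩), if_neg h]

lemma map_beta (μ : ℝ) :
    Measure.map (fun u : ℝ => 1 - u) (betaMeasure μ) = betaMeasure (1 - μ) := by
  have hm : Measurable (fun u : ℝ => 1 - u) := measurable_const.sub measurable_id
  have hmp : MeasurePreserving (fun u : ℝ => 1 - u) volume volume := by
    have := (measurePreserving_add_left (volume : Measure ℝ) 1).comp
      (Measure.measurePreserving_neg (volume : Measure ℝ))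
    simpa [Function.comp_def, sub_eq_add_neg] using this
  have hemb : MeasurableEmbedding (fun u : ℝ => 1 - u) :=
    hm.measurableEmbedding (fun a b hab => by
      have := congrArg (fun x : ℝ => 1 - x) hab
      simpa using this)
  ext s hs
  rw [Measure.map_apply hm hs]
  unfold betaMeasure
  rw [withDensity_apply _ (hm hs), withDensity_apply _ hs]
  calc ∫⁻ u in (fun u : ℝ => 1 - u) ⁻¹' s, ENNReal.ofReal (betaDensity μ u)
      = ∫⁻ u in (fun u : ℝ => 1 - u) ⁻¹' s, ENNReal.ofReal (betaDensity (1 - μ) (1 - u)) := by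
        apply setLIntegral_congr_fun (hm hs)
        exact fun u _ => by rw [betaDensity_reflect]
    _ = ∫⁻ u in s, ENNReal.ofReal (betaDensity (1 - μ) u) := by
        exact hmp.setLIntegral_comp_preimage_emb hemb
          (fun u => ENNReal.ofReal (betaDensity (1 - μ) u)) s

lemma pgn_neg (μ k : ℝ) :
    Measure.map (fun x : ℝ => -x) (PGN μ k) = PGN (1 - μ) k := by
  have hg : Measurable (fun u : ℝ => 1 - u) := measurable_const.sub measurable_id
  unfold PGN
  rw [Measure.map_map measurable_neg measurable_pgnMap]
  have hcomp : ((fun x : ℝ => -x) ∘ fun p : ℝ × ℝ => Real.sqrt p.1 * Real.cos (π * p.2)) =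
      (fun p : ℝ × ℝ => Real.sqrt p.1 * Real.cos (π * p.2)) ∘
        (Prod.map id (fun u : ℝ => 1 - u)) := by
    funext p
    obtain ⟨v, u⟩ := p
    simp only [Function.comp_apply, Prod.map, id_eq]
    rw [show π * (1 - u) = π - π * u by ring, Real.cos_pi_sub]
    ring
  rw [hcomp, ← Measure.map_map measurable_pgnMap (measurable_id.prodMap hg),
    ← Measure.map_prod_map _ _ measurable_id hg, Measure.map_id, map_beta]

lemma beta_set_eq (μ : ℝ) :
    betaMeasure μ {u : ℝ | 0 < Real.cos (π * u)} =
      ∫⁻ u in Ioo (0:ℝ) (1/2), ENNReal.ofReal (betaDensity μ u) := by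
  have hS : MeasurableSet {u : ℝ | 0 < Real.cos (π * u)} :=
    measurableSet_lt measurable_const (by fun_prop)
  unfold betaMeasure
  rw [withDensity_apply _ hS]
  have hind : (fun u => ENNReal.ofReal (betaDensity μ u)) =
      (Ioo (0:ℝ) 1).indicator (fun u => ENNReal.ofReal (betaDensity μ u)) := by
    funext u
    by_cases h : u ∈ Ioo (0:ℝ) 1
    · rw [indicator_of_mem h]
    · rw [indicator_of_notMem h]
      unfold betaDensity
      rw [if_neg (by simpa [mem_Ioo] using h)]
      simp
  calc ∫⁻ u in {u : ℝ | 0 < Real.cos (π * u)}, ENNReal.ofReal (betaDensity μ u)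
      = ∫⁻ u in {u : ℝ | 0 < Real.cos (π * u)},
          (Ioo (0:ℝ) 1).indicator (fun u => ENNReal.ofReal (betaDensity μ u)) u := by
        rw [← hind]
    _ = ∫⁻ u in Ioo (0:ℝ) 1 ∩ {u : ℝ | 0 < Real.cos (π * u)},
          ENNReal.ofReal (betaDensity μ u) := setLIntegral_indicator measurableSet_Ioo _
    _ = ∫⁻ u in Ioo (0:ℝ) (1/2), ENNReal.ofReal (betaDensity μ u) := by
        have hseteq : Ioo (0:ℝ) 1 ∩ {u : ℝ | 0 < Real.cos (π * u)} = Ioo (0:ℝ) (1/2) := ?_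
        · rw [hseteq]
        ext u
        simp only [mem_inter_iff, mem_Ioo, mem_setOf_eq]
        constructor
        · rintro ⟨⟨h0, h1⟩, hc⟩
          refine ⟨h0, ?_⟩
          by_contra hh
          push_neg at hh
          have : Real.cos (π * u) ≤ 0 :=
            Real.cos_nonpos_of_pi_div_two_le_of_le (by nlinarith [Real.pi_pos])
              (by nlinarith [Real.pi_pos])
          linarith
        · rintro ⟨h0, h12⟩
          exact ⟨⟨h0, by linarith⟩,
            Real.cos_pos_of_mem_Ioo ⟨by nlinarith [Real.pi_pos], by nlinarith [Real.pi_pos]⟩⟩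

lemma pgn_Ioi (μ k : ℝ) :
    PGN μ k (Ioi 0) =
      chiSqMeasure k (Ioi 0) *
        ∫⁻ u in Ioo (0:ℝ) (1/2), ENNReal.ofReal (betaDensity μ u) := by
  unfold PGN
  rw [Measure.map_apply measurable_pgnMap measurableSet_Ioi]
  have hset : (fun p : ℝ × ℝ => Real.sqrt p.1 * Real.cos (π * p.2)) ⁻¹' Ioi 0 =
      Ioi (0:ℝ) ×ˢ {u : ℝ | 0 < Real.cos (π * u)} := by
    ext ⟨v, u⟩
    simp only [mem_preimage, mem_Ioi, mem_prod, mem_setOf_eq]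
    constructor
    · intro h
      rcases mul_pos_iff.1 h with ⟨h1, h2⟩ | ⟨h1, h2⟩
      · exact ⟨Real.sqrt_pos.1 h1, h2⟩
      · exact absurd h1 (not_lt.2 (Real.sqrt_nonneg v))
    · rintro ⟨h1, h2⟩
      exact mul_pos (Real.sqrt_pos.2 h1) h2
  rw [hset, Measure.prod_prod, beta_set_eq]

lemma chiSq_ne_top (k : ℝ) (hk : 0 < k) : chiSqMeasure k (Ioi 0) ≠ ⊤ := by
  unfold chiSqMeasure
  rw [withDensity_apply _ measurableSet_Ioi]
  have h1 : IntegrableOn (fun x : ℝ => x ^ (k/2 - 1) * Real.exp (-(1/2) * x ^ (1:ℝ)))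
      (Ioi 0) := integrableOn_rpow_mul_exp_neg_mul_rpow (by linarith) (by norm_num) (by norm_num)
  have h2 : IntegrableOn (fun x : ℝ =>
      x ^ (k/2 - 1) * Real.exp (-x / 2) / ((2:ℝ) ^ (k/2) * Real.Gamma (k/2))) (Ioi 0) := by
    apply Integrable.div_const
    apply h1.congr_fun _ measurableSet_Ioi
    intro x _
    show x ^ (k/2 - 1) * Real.exp (-(1/2) * x ^ (1:ℝ)) = x ^ (k/2 - 1) * Real.exp (-x / 2)
    rw [Real.rpow_one, show -(1/2) * x = -x / 2 by ring]
  have h3 : ∫⁻ v in Ioi (0:ℝ), ENNReal.ofReal (chiSqDensity k v) =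
      ∫⁻ v in Ioi (0:ℝ), ENNReal.ofReal
        (v ^ (k/2 - 1) * Real.exp (-v / 2) / ((2:ℝ) ^ (k/2) * Real.Gamma (k/2))) := by
    apply setLIntegral_congr_fun measurableSet_Ioi
    exact fun v hv => by unfold chiSqDensity; rw [if_pos (mem_Ioi.mp hv)]
  rw [h3]
  exact h2.lintegral_lt_top.ne

lemma chiSq_ne_zero (k : ℝ) (hk : 0 < k) : chiSqMeasure k (Ioi 0) ≠ 0 := by
  unfold chiSqMeasure
  rw [withDensity_apply _ measurableSet_Ioi]
  have hmeas : Measurable (fun v => ENNReal.ofReal (chiSqDensity k v)) :=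
    (measurable_chiSqDensity k).ennreal_ofReal
  have hpos : ∀ v ∈ Ioi (0:ℝ), 0 < chiSqDensity k v := by
    intro v hv
    unfold chiSqDensity
    rw [if_pos (mem_Ioi.mp hv)]
    apply div_pos
    · exact mul_pos (Real.rpow_pos_of_pos hv _) (Real.exp_pos _)
    · exact mul_pos (Real.rpow_pos_of_pos (by norm_num) _)
        (Real.Gamma_pos_of_pos (by linarith))
  have hsupp : Ioi (0:ℝ) ⊆ Function.support (fun v => ENNReal.ofReal (chiSqDensity k v)) := by
    intro v hv
    simp only [Function.mem_support, ne_eq, ENNReal.ofReal_eq_zero, not_le]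
    exact hpos v hv
  have : 0 < ∫⁻ v in Ioi (0:ℝ), ENNReal.ofReal (chiSqDensity k v) := by
    rw [lintegral_pos_iff_support hmeas]
    rw [Measure.restrict_apply (measurableSet_support hmeas)]
    rw [Set.inter_eq_self_of_subset_right hsupp, Real.volume_Ioi]
    exact ENNReal.zero_lt_top
  exact this.ne'

lemma key_lt (μ : ℝ) (h1 : 1/2 < μ) (h2 : μ < 1) :
    ∫⁻ u in Ioo (0:ℝ) (1/2), ENNReal.ofReal (betaDensity μ u) <
      ∫⁻ u in Ioo (0:ℝ) (1/2), ENNReal.ofReal (betaDensity (1 - μ) u) := by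
  have hB : 0 < realBeta (2*μ) (2*(1-μ)) := by
    unfold realBeta
    apply div_pos
    · exact mul_pos (Real.Gamma_pos_of_pos (by linarith)) (Real.Gamma_pos_of_pos (by linarith))
    · exact Real.Gamma_pos_of_pos (by linarith)
  have hBeq : realBeta (2*(1-μ)) (2*(1-(1-μ))) = realBeta (2*μ) (2*(1-μ)) := by
    unfold realBeta
    rw [show 2*(1-(1-μ)) = 2*μ by ring, show 2*(1-μ) + 2*μ = 2*μ + 2*(1-μ) by ring]
    ring
  -- pointwise formulas
  have hform : ∀ u ∈ Ioo (0:ℝ) (1/2),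
      betaDensity μ u = (u/(1-u)) ^ (2*μ-1) / realBeta (2*μ) (2*(1-μ)) ∧
      betaDensity (1-μ) u = (u/(1-u)) ^ (1-2*μ) / realBeta (2*μ) (2*(1-μ)) := by
    rintro u ⟨hu0, hu2⟩
    have h1u : 0 < 1 - u := by linarith
    have e : ∀ c : ℝ, u ^ c * (1-u) ^ (-c) = (u/(1-u)) ^ c := fun c => by
      rw [Real.div_rpow hu0.le h1u.le, Real.rpow_neg h1u.le, div_eq_mul_inv]
    constructor
    · unfold betaDensity
      rw [if_pos ⟨hu0, by linarith⟩, show 1 - 2*μ = -(2*μ-1) by ring, e]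
    · unfold betaDensity
      rw [if_pos ⟨hu0, by linarith⟩, hBeq, show 2*(1-μ)-1 = 1-2*μ by ring,
        show 1-2*(1-μ) = -(1-2*μ) by ring, e]
  have ht : ∀ u ∈ Ioo (0:ℝ) (1/2), 0 < u/(1-u) ∧ u/(1-u) < 1 := by
    rintro u ⟨hu0, hu2⟩
    have h1u : 0 < 1 - u := by linarith
    exact ⟨div_pos hu0 h1u, (div_lt_one h1u).2 (by linarith)⟩
  apply setLIntegral_strict_mono measurableSet_Ioo
  · rw [Real.volume_Ioo]
    simp only [ne_eq, ENNReal.ofReal_eq_zero, not_le]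
    norm_num
  · exact (measurable_betaDensity (1-μ)).ennreal_ofReal
  · -- finiteness
    have hb : ∀ u ∈ Ioo (0:ℝ) (1/2), ENNReal.ofReal (betaDensity μ u) ≤
        ENNReal.ofReal (1 / realBeta (2*μ) (2*(1-μ))) := by
      intro u hu
      apply ENNReal.ofReal_le_ofReal
      rw [(hform u hu).1]
      gcongr
      exact Real.rpow_le_one (ht u hu).1.le (ht u hu).2.le (by linarith)
    have hle : ∫⁻ u in Ioo (0:ℝ) (1/2), ENNReal.ofReal (betaDensity μ u) ≤
        ENNReal.ofReal (1 / realBeta (2*μ) (2*(1-μ))) * volume (Ioo (0:ℝ) (1/2)) := by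
      calc ∫⁻ u in Ioo (0:ℝ) (1/2), ENNReal.ofReal (betaDensity μ u)
          ≤ ∫⁻ _ in Ioo (0:ℝ) (1/2), ENNReal.ofReal (1 / realBeta (2*μ) (2*(1-μ))) :=
            setLIntegral_mono' measurableSet_Ioo hb
        _ = ENNReal.ofReal (1 / realBeta (2*μ) (2*(1-μ))) * volume (Ioo (0:ℝ) (1/2)) :=
            setLIntegral_const _ _
    refine ne_top_of_le_ne_top ?_ hle
    apply ENNReal.mul_ne_top ENNReal.ofReal_ne_top
    rw [Real.volume_Ioo]
    exact ENNReal.ofReal_ne_top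
  · -- strict pointwise
    apply ae_of_all
    intro u hu
    have htu := ht u hu
    rw [(hform u hu).1, (hform u hu).2]
    have hnum : (u/(1-u)) ^ (2*μ-1) < (u/(1-u)) ^ (1-2*μ) :=
      Real.rpow_lt_rpow_of_exponent_gt htu.1 htu.2 (by linarith)
    have hposg : 0 < (u/(1-u)) ^ (1-2*μ) / realBeta (2*μ) (2*(1-μ)) :=
      div_pos (Real.rpow_pos_of_pos htu.1 _) hB
    rw [ENNReal.ofReal_lt_ofReal_iff hposg]
    gcongr

theorem stmt12 (k μ : ℝ) (hk : 0 < k) (hμ : μ ∈ Set.Ioo (0:ℝ) 1) :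
    Measure.map (fun x : ℝ => -x) (PGN μ k) = PGN μ k ↔ μ = 1/2 := by
  obtain ⟨hμ0, hμ1⟩ := hμ
  constructor
  · intro h
    have hmap : PGN μ k = PGN (1 - μ) k := by rw [← pgn_neg μ k, h]
    have hI := congrArg (fun m : Measure ℝ => m (Ioi 0)) hmap
    simp only [pgn_Ioi] at hI
    have hEq : (∫⁻ u in Ioo (0:ℝ) (1/2), ENNReal.ofReal (betaDensity μ u)) =
        ∫⁻ u in Ioo (0:ℝ) (1/2), ENNReal.ofReal (betaDensity (1 - μ) u) :=
      (ENNReal.mul_right_inj (chiSq_ne_zero k hk) (chiSq_ne_top k hk)).1 hI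
    by_contra hne
    rcases lt_or_gt_of_ne hne with hlt | hgt
    · have hkey := key_lt (1 - μ) (by linarith) (by linarith)
      rw [show (1:ℝ) - (1 - μ) = μ by ring] at hkey
      exact hkey.ne' hEq
    · exact (key_lt μ hgt hμ1).ne hEq
  · intro h
    subst h
    rw [pgn_neg]
    norm_num
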